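/- There exists an absolute constant C > 0 such that for every natural number n, if A ⊆ 𝔽₃ⁿ is a cap set (i.e., A contains no triple x, x+d, x+2d with d ≠ 0), then |A| ≤ C · 2.838ⁿ. -/

import Mathlib

open Finset
abbrev F3 := ZMod 3
abbrev Expo (n : ℕ) := Fin n → Fin 3
def deg {n : ℕ} (α : Expo n) : ℕ := ∑ i, (α i : ℕ)
def mon {n : ℕ} (α : Expo n) : (Fin n → F3) → F3 := fun x => ∏ i, x i ^ (α i : ℕ)

lemma pow_red (x : F3) (k : ℕ) : x ^ (k+3) = x ^ (k+1) := by
  have h3 : x ^ 3 = x := by revert x; decide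
  calc x ^ (k+3) = x ^ k * x ^ 3 := by rw [pow_add]
  _ = x ^ k * x := by rw [h3]
  _ = x ^ (k+1) := by rw [pow_succ]

lemma exists_red (k : ℕ) : ∃ r : Fin 3, (r : ℕ) ≤ k ∧ ∀ x : F3, x ^ k = x ^ (r : ℕ) := by
  induction k using Nat.strong_induction_on with
  | _ k ih =>
    match k, ih with
    | 0, _ => exact ⟨0, le_refl _, fun x => rfl⟩
    | 1, _ => exact ⟨1, le_refl _, fun x => rfl⟩
    | 2, _ => exact ⟨2, le_refl _, fun x => rfl⟩
    | (m+3), ih =>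
      obtain ⟨r, hr, hx⟩ := ih (m+1) (by omega)
      exact ⟨r, by omega, fun x => by rw [pow_red, hx]⟩

variable {n : ℕ}

def monSpan (n : ℕ) : Submodule F3 ((Fin n → F3) → F3) :=
  Submodule.span F3 (Set.range (mon (n := n)))

lemma xpow_mul_mon (j : Fin n) (k : ℕ) (α : Expo n) :
    (fun x => x j ^ k * mon α x) ∈ monSpan n := by
  obtain ⟨r, _, hr⟩ := exists_red (k + (α j : ℕ))
  have : (fun x : Fin n → F3 => x j ^ k * mon α x) = mon (Function.update α j r) := by
    funext x
    simp only [mon]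
    have split : ∀ (β : Expo n), ∏ i, x i ^ (β i : ℕ)
        = x j ^ (β j : ℕ) * ∏ i ∈ univ.erase j, x i ^ (β i : ℕ) :=
      fun β => (Finset.mul_prod_erase univ (fun i => x i ^ (β i : ℕ)) (Finset.mem_univ j)).symm
    rw [split α, split (Function.update α j r), ← mul_assoc, ← pow_add, hr,
      Function.update_self]
    congr 1
    apply Finset.prod_congr rfl
    intro i hi
    rw [Function.update_of_ne (Finset.mem_erase.mp hi).1]
  rw [this]
  exact Submodule.subset_span ⟨_, rfl⟩

lemma quad_mul_mem (j : Fin n) (c₀ c₁ c₂ : F3) {g : (Fin n → F3) → F3}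
    (hg : g ∈ monSpan n) :
    (fun x => (c₀ + c₁ * x j + c₂ * x j ^ 2) * g x) ∈ monSpan n := by
  induction hg using Submodule.span_induction with
  | mem f hf =>
    obtain ⟨α, rfl⟩ := hf
    have h0 : (fun x : Fin n → F3 => x j ^ 0 * mon α x) ∈ monSpan n := xpow_mul_mon j 0 α
    have h1 := xpow_mul_mon j 1 α
    have h2 := xpow_mul_mon j 2 α
    have := Submodule.add_mem _ (Submodule.add_mem _
      (Submodule.smul_mem _ c₀ h0) (Submodule.smul_mem _ c₁ h1)) (Submodule.smul_mem _ c₂ h2)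
    convert this using 1
    funext x
    simp only [Pi.add_apply, Pi.smul_apply, smul_eq_mul, pow_zero]
    ring
  | zero =>
    have h0 : (fun x : Fin n → F3 => (c₀ + c₁ * x j + c₂ * x j ^ 2)
        * (0 : (Fin n → F3) → F3) x) = 0 := by funext x; simp
    rw [h0]; exact (monSpan n).zero_mem
  | add f₁ f₂ _ _ ih1 ih2 =>
    have := Submodule.add_mem _ ih1 ih2
    convert this using 1
    funext x; simp only [Pi.add_apply]; ring
  | smul c f _ ih =>
    have := Submodule.smul_mem _ c ih
    convert this using 1
    funext x; simp only [Pi.smul_apply, smul_eq_mul]; ring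

def delta (y : Fin n → F3) : (Fin n → F3) → F3 := fun x => ∏ j, (1 - (x j - y j)^2)

lemma delta_apply (y x : Fin n → F3) : delta y x = if x = y then 1 else 0 := by
  by_cases h : x = y
  · subst h; simp [delta]
  · obtain ⟨j, hj⟩ := Function.ne_iff.mp h
    rw [delta, if_neg h]
    apply Finset.prod_eq_zero (Finset.mem_univ j)
    have : x j - y j ≠ 0 := sub_ne_zero.mpr hj
    revert this; generalize x j - y j = z; revert z; decide

lemma delta_mem (y : Fin n → F3) : delta y ∈ monSpan n := by
  have key : ∀ s : Finset (Fin n),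
      (fun x => ∏ j ∈ s, (1 - (x j - y j)^2)) ∈ monSpan n := by
    intro s
    induction s using Finset.induction_on with
    | empty =>
      have h1 : mon (n:=n) (fun _ => 0) ∈ monSpan n :=
        Submodule.subset_span (Set.mem_range_self _)
      convert h1 using 1
      funext x; simp [mon]
    | @insert j s hj ih =>
      have := quad_mul_mem j (1 - y j ^ 2) (2 * y j) (-1) ih
      convert this using 1
      funext x
      rw [Finset.prod_insert hj]
      ring
  exact key univ

lemma monSpan_top : monSpan n = ⊤ := by
  rw [eq_top_iff]
  intro f _
  have : f = ∑ y : Fin n → F3, f y • delta y := by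
    funext x
    simp only [Finset.sum_apply, Pi.smul_apply, delta_apply, smul_eq_mul]
    simp [Finset.sum_ite_eq' Finset.univ x f]
  rw [this]
  exact Submodule.sum_mem _ fun y _ => Submodule.smul_mem _ _ (delta_mem y)

section SupportLemma
open Submodule Module Matrix
set_option linter.unusedSectionVars false
variable {K : Type*} [Field K] {X : Type*} [Fintype X] [DecidableEq X] [Fintype K] [DecidableEq K]

lemma exists_large_support (W : Submodule K (X → K)) :
    ∃ f ∈ W, finrank K W ≤ (univ.filter (fun x => f x ≠ 0)).card := by
  classical
  set r := finrank K W with hr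
  obtain b := finBasis K W
  rw [← hr] at b
  -- the matrix of basis functions
  set N : Matrix (Fin r) X K := fun i x => (b i : X → K) x with hN
  -- columns
  set v : X → (Fin r → K) := fun x i => N i x with hv
  -- transpose rank
  have hinj : Function.Injective (Matrix.mulVecLin Nᵀ) := by
    rw [← LinearMap.ker_eq_bot]
    rw [Submodule.eq_bot_iff]
    intro c hc
    simp only [LinearMap.mem_ker] at hc
    have hcc : ∑ i, c i • (b i : X → K) = 0 := by
      funext x
      have := congrFun hc x
      simpa [Matrix.mulVecLin, Matrix.mulVec, Matrix.vecMul, dotProduct, hN, Matrix.transpose, Matrix.of_apply, mul_comm] using this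
    have : ∑ i, c i • b i = (0 : W) := by
      apply Subtype.ext
      push_cast
      simpa using hcc
    have hc0 := linearIndependent_iff'.mp b.linearIndependent univ c (by simpa using this)
    funext i; exact hc0 i (mem_univ i)
  have hrankT : Nᵀ.rank = r := by
    rw [Matrix.rank]
    have := LinearMap.finrank_range_add_finrank_ker (Matrix.mulVecLin Nᵀ)
    rw [LinearMap.ker_eq_bot.mpr hinj, finrank_bot, add_zero] at this
    rw [this, Module.finrank_pi, Fintype.card_fin]
  have hrankN : N.rank = r := by rw [← Matrix.rank_transpose, hrankT]
  -- span of columns is everything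
  have hspan : span K (Set.range v) = ⊤ := by
    apply Submodule.eq_top_of_finrank_eq
    have : N.rank = finrank K (span K (Set.range Nᵀ)) := N.rank_eq_finrank_span_cols
    rw [hrankN] at this
    have hvT : Set.range v = Set.range Nᵀ := rfl
    rw [hvT, ← this, Module.finrank_pi, Fintype.card_fin]
  -- extract a basis subset
  obtain ⟨s, hs_sub, hs_span, hs_ind⟩ := exists_linearIndependent K (Set.range v)
  rw [hspan] at hs_span
  haveI : Fintype s := (Set.Finite.subset (Set.finite_range v) hs_sub).fintype
  have hcard : Fintype.card s = r := by
    have h1 := finrank_span_eq_card hs_ind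
    rw [Subtype.range_coe, hs_span, finrank_top, Module.finrank_pi, Fintype.card_fin] at h1
    exact h1.symm
  -- choose preimages of basis columns
  have hpre : ∀ z : s, ∃ x : X, v x = (z : Fin r → K) := fun z => hs_sub z.2
  choose g hg using hpre
  have ginj : Function.Injective g := by
    intro z w h
    apply Subtype.ext
    rw [← hg z, ← hg w, h]
  -- the evaluation-style map
  let φ : (Fin r → K) → ((Fin r → K) →ₗ[K] K) := fun z => ∑ i, z i • LinearMap.proj i
  have φ_apply : ∀ z c, φ z c = ∑ i, z i * c i := by
    intro z c
    simp [φ, LinearMap.sum_apply, LinearMap.proj, smul_eq_mul]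
  let D : (Fin r → K) →ₗ[K] (s → K) := LinearMap.pi (fun z => φ (z : Fin r → K))
  have hDinj : Function.Injective D := by
    rw [← LinearMap.ker_eq_bot, Submodule.eq_bot_iff]
    intro c hc
    simp only [LinearMap.mem_ker] at hc
    let ψ : (Fin r → K) →ₗ[K] K := ∑ i, c i • LinearMap.proj i
    have ψ_apply : ∀ y, ψ y = ∑ i, c i * y i := by
      intro y; simp [ψ, LinearMap.sum_apply, LinearMap.proj, smul_eq_mul]
    have hker : span K s ≤ LinearMap.ker ψ := by
      rw [Submodule.span_le]
      intro z hz
      have : φ z c = 0 := by simpa [D] using congrFun hc ⟨z, hz⟩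
      rw [φ_apply] at this
      simp only [SetLike.mem_coe, LinearMap.mem_ker]
      rw [ψ_apply]
      rw [← this]
      apply Finset.sum_congr rfl
      intro i _; ring
    rw [hs_span] at hker
    have hψ : ψ = 0 := by
      apply LinearMap.ext
      intro y
      exact hker (Submodule.mem_top)
    funext i
    have := congrArg (fun (L : (Fin r → K) →ₗ[K] K) => L (Pi.single i 1)) hψ
    simp only [LinearMap.zero_apply] at this
    rw [ψ_apply] at this
    simpa [Pi.single_apply, Finset.sum_ite_eq] using this
  have hDsurj : Function.Surjective D := by
    rw [← LinearMap.injective_iff_surjective_of_finrank_eq_finrank]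
    · exact hDinj
    · rw [Module.finrank_pi, Module.finrank_pi, Fintype.card_fin, hcard]
  obtain ⟨c, hc⟩ := hDsurj (fun _ => 1)
  refine ⟨((∑ i, c i • b i : W) : X → K), (∑ i, c i • b i : W).2, ?_⟩
  have hval : ∀ z : s, ((∑ i, c i • b i : W) : X → K) (g z) = 1 := by
    intro z
    have h1 : ((∑ i, c i • b i : W) : X → K) (g z) = ∑ i, c i * N i (g z) := by
      push_cast
      simp [Finset.sum_apply, smul_eq_mul, N]
    rw [h1]
    have h2 : ∀ i, N i (g z) = (z : Fin r → K) i := fun i => congrFun (hg z) i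
    have h3 : ∑ i, c i * N i (g z) = ∑ i, (z : Fin r → K) i * c i := by
      apply Finset.sum_congr rfl
      intro i _
      rw [h2 i]; ring
    rw [h3, ← φ_apply]
    have := congrFun hc z
    simpa [D] using this
  calc r = Fintype.card s := hcard.symm
  _ = (univ : Finset s).card := (Finset.card_univ).symm
  _ ≤ (univ.filter (fun x => ((∑ i, c i • b i : W) : X → K) x ≠ 0)).card := by
      apply Finset.card_le_card_of_injOn g
      · intro z _
        simp only [Finset.mem_coe, mem_filter, mem_univ, true_and]
        rw [hval z]
        exact one_ne_zero
      · intro a _ b _ h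
        exact ginj h

end SupportLemma

section RankAdd
open Matrix Module
lemma rank_add_le' {K : Type*} [Field K] {m' n' : Type*} [Fintype m'] [Fintype n']
    (A B : Matrix m' n' K) : (A + B).rank ≤ A.rank + B.rank := by
  classical
  rw [Matrix.rank, Matrix.rank, Matrix.rank, Matrix.mulVecLin_add]
  have hle : LinearMap.range (A.mulVecLin + B.mulVecLin)
      ≤ LinearMap.range A.mulVecLin ⊔ LinearMap.range B.mulVecLin := by
    rintro _ ⟨x, rfl⟩
    exact Submodule.mem_sup.mpr ⟨A.mulVecLin x, ⟨x, rfl⟩, B.mulVecLin x, ⟨x, rfl⟩, rfl⟩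
  have h1 := Submodule.finrank_mono hle
  have h2 := Submodule.finrank_sup_add_finrank_inf_eq
    (LinearMap.range A.mulVecLin) (LinearMap.range B.mulVecLin)
  omega
end RankAdd
section CLP
open Finset Matrix
variable {n : ℕ}

def monN (β : Fin n → ℕ) : (Fin n → F3) → F3 := fun x => ∏ i, x i ^ β i
def degN (β : Fin n → ℕ) : ℕ := ∑ i, β i

def toExpo (β : Fin n → ℕ) : Expo n := fun i => ⟨min (β i) 2, by omega⟩

lemma monN_eq_toExpo {β : Fin n → ℕ} (hβ : ∀ i, β i ≤ 2) : monN β = mon (toExpo β) := by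
  funext x
  apply Finset.prod_congr rfl
  intro i _
  congr 1
  simp [toExpo, min_eq_left (hβ i)]

lemma deg_toExpo {β : Fin n → ℕ} (hβ : ∀ i, β i ≤ 2) : deg (toExpo β) = degN β := by
  apply Finset.sum_congr rfl
  intro i _
  simp [toExpo, min_eq_left (hβ i)]

lemma char3_vec (a : Fin n → F3) : a + a = -a := by
  funext i
  have : ∀ u : F3, u + u = -u := by decide
  simpa using this (a i)

lemma clp_support_bound (e : ℕ) (A : Finset (Fin n → F3))
    (hcap : ¬ ∃ x d : Fin n → F3, d ≠ 0 ∧ x ∈ A ∧ x + d ∈ A ∧ x + 2 • d ∈ A)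
    (f : (Fin n → F3) → F3)
    (hfV : f ∈ Submodule.span F3 (mon '' {α : Expo n | deg α ≤ 2*e+1}))
    (hsupp : ∀ x, x ∉ A.image (fun a => -a) → f x = 0) :
    (univ.filter (fun x => f x ≠ 0)).card
      ≤ 2 * (univ.filter (fun α : Expo n => deg α ≤ e)).card := by
  classical
  set Me := univ.filter (fun α : Expo n => deg α ≤ e) with hMe
  set s := A.filter (fun a => f (-a) ≠ 0) with hs
  have step1 : (univ.filter (fun x => f x ≠ 0)).card ≤ s.card := by
    apply Finset.card_le_card_of_injOn (fun x => -x)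
    · intro x hx
      simp only [Finset.mem_coe, mem_filter, mem_univ, true_and] at hx
      have hxB : x ∈ A.image (fun a => -a) := by
        by_contra hB; exact hx (hsupp x hB)
      obtain ⟨a, ha, rfl⟩ := Finset.mem_image.mp hxB
      simp only [hs, Finset.mem_coe, mem_filter, neg_neg]
      exact ⟨ha, hx⟩
    · intro a _ b _ h
      simpa using congrArg Neg.neg h
  -- coefficients
  obtain ⟨l, hl_supp, hl⟩ := (Finsupp.mem_span_image_iff_linearCombination F3).mp hfV
  have hdeg : ∀ α ∈ l.support, deg α ≤ 2*e+1 := by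
    intro α hα
    exact (Finsupp.mem_supported F3 l).mp hl_supp hα
  have hf_eq : ∀ z, f z = ∑ α ∈ l.support, l α * mon α z := by
    intro z
    rw [← hl, Finsupp.linearCombination_apply, Finsupp.sum]
    simp [Finset.sum_apply]
  -- expansion
  set K := l.support.sigma
      (fun α => Fintype.piFinset (fun i => Finset.range ((α i : ℕ) + 1))) with hK
  set coef : ((_ : Expo n) × (Fin n → ℕ)) → F3 :=
    fun k => l k.1 * ∏ i, (Nat.choose (k.1 i : ℕ) (k.2 i) : F3) with hcoef
  set sub2 : ((_ : Expo n) × (Fin n → ℕ)) → (Fin n → ℕ) :=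
    fun k i => (k.1 i : ℕ) - k.2 i with hsub2
  have expand : ∀ a b : Fin n → F3,
      f (a + b) = ∑ k ∈ K, coef k * (monN k.2 a * monN (sub2 k) b) := by
    intro a b
    rw [hf_eq, hK, Finset.sum_sigma]
    apply Finset.sum_congr rfl
    intro α hα
    have hmon : mon α (a+b) = ∑ β ∈ Fintype.piFinset (fun i => Finset.range ((α i:ℕ)+1)),
        ∏ i, ((a i)^(β i) * (b i)^((α i:ℕ) - β i) * ((Nat.choose (α i:ℕ) (β i) : ℕ) : F3)) := by
      rw [mon]
      have hstep : ∀ i : Fin n, ((a+b) i)^(α i : ℕ)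
          = ∑ j ∈ Finset.range ((α i:ℕ)+1),
              (a i)^j * (b i)^((α i:ℕ)-j) * ((Nat.choose (α i:ℕ) j : ℕ) : F3) := by
        intro i
        rw [Pi.add_apply, add_pow]
      rw [Finset.prod_congr rfl (fun i _ => hstep i), Finset.prod_univ_sum]
    rw [hmon, Finset.mul_sum]
    apply Finset.sum_congr rfl
    intro β hβ
    simp only [hcoef, hsub2, monN]
    rw [Finset.prod_mul_distrib, Finset.prod_mul_distrib]
    ring
  -- basic facts about K
  have hKfact : ∀ k ∈ K, (∀ i, k.2 i ≤ (k.1 i : ℕ))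
      ∧ degN k.2 + degN (sub2 k) = deg k.1 := by
    intro k hk
    rw [hK, Finset.mem_sigma] at hk
    have h2 := Fintype.mem_piFinset.mp hk.2
    have hle : ∀ i, k.2 i ≤ (k.1 i : ℕ) := by
      intro i
      have := h2 i
      rw [Finset.mem_range] at this
      omega
    refine ⟨hle, ?_⟩
    rw [degN, degN, deg, ← Finset.sum_add_distrib]
    apply Finset.sum_congr rfl
    intro i _
    have := hle i
    simp only [hsub2]
    omega
  set K1 := K.filter (fun k => degN k.2 ≤ e) with hK1
  set K2 := K.filter (fun k => ¬ degN k.2 ≤ e) with hK2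
  -- matrices
  set Mat : Matrix s s F3 := fun a b => f ((a : Fin n → F3) + (b : Fin n → F3)) with hMat
  set Mat1 : Matrix s s F3 :=
    fun a b => ∑ k ∈ K1, coef k * (monN k.2 (a : Fin n → F3) * monN (sub2 k) (b : Fin n → F3))
    with hMat1
  set Mat2 : Matrix s s F3 :=
    fun a b => ∑ k ∈ K2, coef k * (monN k.2 (a : Fin n → F3) * monN (sub2 k) (b : Fin n → F3))
    with hMat2
  have hsplit : Mat = Mat1 + Mat2 := by
    ext a b
    show f ((a : Fin n → F3) + (b : Fin n → F3)) = Mat1 a b + Mat2 a b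
    rw [expand]
    exact (Finset.sum_filter_add_sum_filter_not K _ _).symm
  -- Mat is diagonal with nonzero entries
  have hsA : ∀ a : s, (a : Fin n → F3) ∈ A := fun a => (Finset.mem_filter.mp a.2).1
  have hsf : ∀ a : s, f (-(a : Fin n → F3)) ≠ 0 := fun a => (Finset.mem_filter.mp a.2).2
  have hdiag : Mat = Matrix.diagonal (fun a : s => f (-(a : Fin n → F3))) := by
    ext a b
    by_cases hab : a = b
    · subst hab
      rw [Matrix.diagonal_apply_eq]
      show f ((a : Fin n → F3) + (a : Fin n → F3)) = f (-(a : Fin n → F3))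
      congr 1
      exact char3_vec _
    · rw [Matrix.diagonal_apply_ne _ hab]
      show f ((a : Fin n → F3) + (b : Fin n → F3)) = 0
      apply hsupp
      intro hmem
      obtain ⟨c, hc, hcab⟩ := Finset.mem_image.mp hmem
      apply hcap
      have hab' : (a : Fin n → F3) ≠ (b : Fin n → F3) := fun h => hab (Subtype.ext h)
      refine ⟨a, (b : Fin n → F3) - (a : Fin n → F3), sub_ne_zero.mpr (Ne.symm hab'),
        hsA a, ?_, ?_⟩
      · have habs : (a : Fin n → F3) + ((b : Fin n → F3) - (a : Fin n → F3))
            = (b : Fin n → F3) := by abel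
        rw [habs]
        exact hsA b
      have hkey : ∀ u v w : F3, -w = u + v → u + 2 • (v - u) = w := by decide
      have : (a : Fin n → F3) + 2 • ((b : Fin n → F3) - (a : Fin n → F3)) = c := by
        funext i
        have h1 := congrFun hcab i
        simp only [Pi.neg_apply, Pi.add_apply] at h1
        have := hkey ((a : Fin n → F3) i) ((b : Fin n → F3) i) (c i) h1
        simpa using this
      rw [this]
      exact hc
  have hrank : Mat.rank = s.card := by
    rw [hdiag, Matrix.rank_diagonal]
    rw [Fintype.card_congr (Equiv.subtypeUnivEquiv hsf)]
    exact Fintype.card_coe s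
  -- factor Mat1 = P * Q
  set P : Matrix s Me F3 := fun a β => mon (β : Expo n) (a : Fin n → F3) with hP
  set Q : Matrix Me s F3 := fun β b =>
    ∑ k ∈ K1.filter (fun k => toExpo k.2 = (β : Expo n)),
      coef k * monN (sub2 k) (b : Fin n → F3) with hQ
  have hK1mem : ∀ k ∈ K1, (∀ i, k.2 i ≤ 2) ∧ toExpo k.2 ∈ Me := by
    intro k hk
    rw [hK1, Finset.mem_filter] at hk
    obtain ⟨hkK, hke⟩ := hk
    have h1 := (hKfact k hkK).1
    have hb : ∀ i, k.2 i ≤ 2 := fun i => le_trans (h1 i) (by omega)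
    refine ⟨hb, ?_⟩
    rw [hMe, Finset.mem_filter]
    exact ⟨Finset.mem_univ _, by rw [deg_toExpo hb]; exact hke⟩
  have hfact1 : Mat1 = P * Q := by
    ext a b
    show (∑ k ∈ K1, coef k * (monN k.2 (a : Fin n → F3) * monN (sub2 k) (b : Fin n → F3)))
      = ∑ β : Me, P a β * Q β b
    have hrhs : ∑ β : Me, P a β * Q β b
        = ∑ β ∈ Me, mon β (a : Fin n → F3) *
            ∑ k ∈ K1.filter (fun k => toExpo k.2 = β),
              coef k * monN (sub2 k) (b : Fin n → F3) := by
      rw [← Finset.sum_coe_sort Me (fun β => mon β (a : Fin n → F3) *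
            ∑ k ∈ K1.filter (fun k => toExpo k.2 = β),
              coef k * monN (sub2 k) (b : Fin n → F3))]
    rw [hrhs]
    rw [← Finset.sum_fiberwise_of_maps_to (fun k hk => (hK1mem k hk).2)
      (fun k => coef k * (monN k.2 (a : Fin n → F3) * monN (sub2 k) (b : Fin n → F3)))]
    apply Finset.sum_congr rfl
    intro β _
    rw [Finset.mul_sum]
    apply Finset.sum_congr rfl
    intro k hk
    rw [Finset.mem_filter] at hk
    have hb := (hK1mem k hk.1).1
    rw [monN_eq_toExpo hb, hk.2]
    ring
  -- factor Mat2 = Q2 * P2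
  set P2 : Matrix Me s F3 := fun γ b => mon (γ : Expo n) (b : Fin n → F3) with hP2
  set Q2 : Matrix s Me F3 := fun a γ =>
    ∑ k ∈ K2.filter (fun k => toExpo (sub2 k) = (γ : Expo n)),
      coef k * monN k.2 (a : Fin n → F3) with hQ2
  have hK2mem : ∀ k ∈ K2, (∀ i, sub2 k i ≤ 2) ∧ toExpo (sub2 k) ∈ Me := by
    intro k hk
    rw [hK2, Finset.mem_filter] at hk
    obtain ⟨hkK, hke⟩ := hk
    obtain ⟨h1, h2⟩ := hKfact k hkK
    have hαd : deg k.1 ≤ 2*e+1 := by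
      rw [hK, Finset.mem_sigma] at hkK
      exact hdeg k.1 hkK.1
    have hsub_le : ∀ i, sub2 k i ≤ 2 := by
      intro i
      have := (k.1 i).2
      simp only [hsub2]
      omega
    have hdegsub : degN (sub2 k) ≤ e := by omega
    refine ⟨hsub_le, ?_⟩
    rw [hMe, Finset.mem_filter]
    exact ⟨Finset.mem_univ _, by rw [deg_toExpo hsub_le]; exact hdegsub⟩
  have hfact2 : Mat2 = Q2 * P2 := by
    ext a b
    show (∑ k ∈ K2, coef k * (monN k.2 (a : Fin n → F3) * monN (sub2 k) (b : Fin n → F3)))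
      = ∑ γ : Me, Q2 a γ * P2 γ b
    have hrhs : ∑ γ : Me, Q2 a γ * P2 γ b
        = ∑ γ ∈ Me, (∑ k ∈ K2.filter (fun k => toExpo (sub2 k) = γ),
              coef k * monN k.2 (a : Fin n → F3)) * mon γ (b : Fin n → F3) := by
      rw [← Finset.sum_coe_sort Me (fun γ => (∑ k ∈ K2.filter (fun k => toExpo (sub2 k) = γ),
              coef k * monN k.2 (a : Fin n → F3)) * mon γ (b : Fin n → F3))]
    rw [hrhs]
    rw [← Finset.sum_fiberwise_of_maps_to (fun k hk => (hK2mem k hk).2)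
      (fun k => coef k * (monN k.2 (a : Fin n → F3) * monN (sub2 k) (b : Fin n → F3)))]
    apply Finset.sum_congr rfl
    intro γ _
    rw [Finset.sum_mul]
    apply Finset.sum_congr rfl
    intro k hk
    rw [Finset.mem_filter] at hk
    have hb := (hK2mem k hk.1).1
    rw [monN_eq_toExpo hb, hk.2]
    ring
  -- rank bounds
  have hcardMe : Fintype.card Me = Me.card := Fintype.card_coe Me
  have hr1 : Mat1.rank ≤ Me.card := by
    rw [hfact1]
    exact le_trans (Matrix.rank_mul_le_left P Q) (by rw [← hcardMe]; exact P.rank_le_card_width)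
  have hr2 : Mat2.rank ≤ Me.card := by
    rw [hfact2]
    exact le_trans (Matrix.rank_mul_le_right Q2 P2)
      (by rw [← hcardMe]; exact P2.rank_le_card_height)
  have hle : s.card ≤ 2 * Me.card := by
    have := rank_add_le' Mat1 Mat2
    rw [← hsplit, hrank] at this
    omega
  omega
end CLP
section Dim
open Finset Submodule Module
variable {n : ℕ}

lemma delta_eq_single (y : Fin n → F3) : delta y = Pi.single y (1 : F3) := by
  funext x
  rw [delta_apply, Pi.single_apply]

lemma card_bound (e : ℕ) (A : Finset (Fin n → F3))
    (hcap : ¬ ∃ x d : Fin n → F3, d ≠ 0 ∧ x ∈ A ∧ x + d ∈ A ∧ x + 2 • d ∈ A) :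
    A.card ≤ (univ.filter (fun α : Expo n => ¬ deg α ≤ 2*e+1)).card
      + 2 * (univ.filter (fun α : Expo n => deg α ≤ e)).card := by
  classical
  set d := 2*e+1 with hd
  set u := (univ.filter (fun α : Expo n => ¬ deg α ≤ d)).card with hu
  set m := (univ.filter (fun α : Expo n => deg α ≤ e)).card with hm
  set B := A.image (fun a => -a) with hB
  have hBcard : B.card = A.card := Finset.card_image_of_injective A neg_injective
  set Vd := span F3 (mon '' {α : Expo n | deg α ≤ d}) with hVd
  set Ud := span F3 (mon '' {α : Expo n | ¬ deg α ≤ d}) with hUd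
  set Z := span F3 (delta '' (B : Set (Fin n → F3))) with hZ
  -- functions in Z vanish off B
  have hsupZ : ∀ g ∈ Z, ∀ x, x ∉ B → g x = 0 := by
    intro g hg
    induction hg using Submodule.span_induction with
    | mem g hgm =>
      obtain ⟨y, hy, rfl⟩ := hgm
      intro x hx
      rw [delta_apply, if_neg]
      rintro rfl
      exact hx hy
    | zero => intro x _; rfl
    | add g₁ g₂ _ _ ih1 ih2 =>
      intro x hx
      simp only [Pi.add_apply, ih1 x hx, ih2 x hx, add_zero]
    | smul c g _ ih =>
      intro x hx
      simp only [Pi.smul_apply, ih x hx, smul_zero]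
  -- finrank Z = A.card
  have hZrank : finrank F3 Z = A.card := by
    have himg : delta '' (B : Set (Fin n → F3))
        = Set.range (fun b : B => delta (b : Fin n → F3)) := by
      rw [Set.image_eq_range]
      rfl
    have hind : LinearIndependent F3 (fun b : B => delta (b : Fin n → F3)) := by
      have h1 : LinearIndependent F3
          (fun b : B => Pi.single (M := fun _ => F3) (b : Fin n → F3) (1 : F3)) := by
        have := (Pi.basisFun F3 (Fin n → F3)).linearIndependent
        have h2 := this.comp (fun b : B => (b : Fin n → F3)) Subtype.val_injective
        convert h2 using 1
        funext b
        show Pi.single (M := fun _ => F3) ((b : Fin n → F3)) (1 : F3)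
          = (Pi.basisFun F3 (Fin n → F3)) ((b : Fin n → F3))
        rw [Pi.basisFun_apply]
      convert h1 using 1
      funext b
      rw [delta_eq_single]
    rw [hZ, himg, finrank_span_eq_card hind]
    rw [Fintype.card_coe, hBcard]
  -- finrank Ud ≤ u
  have hUrank : finrank F3 Ud ≤ u := by
    have hset : {α : Expo n | ¬ deg α ≤ d} = ↑(univ.filter (fun α : Expo n => ¬ deg α ≤ d)) := by
      ext α
      simp only [Finset.coe_filter, Finset.mem_univ, true_and, Set.mem_setOf_eq]
    have : Ud = span F3 ↑((univ.filter (fun α : Expo n => ¬ deg α ≤ d)).image mon) := by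
      rw [hUd, hset, Finset.coe_image]
    rw [this]
    refine le_trans (finrank_span_finset_le_card _) ?_
    exact Finset.card_image_le
  -- Vd ⊔ Ud = ⊤
  have hVU : Vd ⊔ Ud = ⊤ := by
    rw [hVd, hUd, ← Submodule.span_union, ← Set.image_union]
    have : {α : Expo n | deg α ≤ d} ∪ {α : Expo n | ¬ deg α ≤ d} = Set.univ := by
      ext α; simp; omega
    rw [this, Set.image_univ, ← monSpan_top (n := n)]
    rfl
  -- dimension chase
  set N := finrank F3 ((Fin n → F3) → F3) with hN
  have h5 : N ≤ finrank F3 Vd + finrank F3 Ud := by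
    have := Submodule.finrank_sup_add_finrank_inf_eq Vd Ud
    rw [hVU] at this
    have htop : finrank F3 (⊤ : Submodule F3 ((Fin n → F3) → F3)) = N := finrank_top F3 _
    omega
  have h6 : finrank F3 (Vd ⊔ Z : Submodule F3 _) ≤ N := Submodule.finrank_le _
  have h7 := Submodule.finrank_sup_add_finrank_inf_eq Vd Z
  have hlow : A.card ≤ u + finrank F3 (Vd ⊓ Z : Submodule F3 _) := by omega
  -- apply support lemma and CLP
  obtain ⟨f, hfW, hfsupp⟩ := exists_large_support (Vd ⊓ Z)
  have hfV : f ∈ Vd := hfW.1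
  have hfZ : f ∈ Z := hfW.2
  have hclp := clp_support_bound e A hcap f (by rw [← hd]; exact hfV)
    (fun x hx => hsupZ f hfZ x (by rwa [← hB] at hx))
  omega
end Dim
section Numerics
open Finset

lemma sum_pow_deg (n : ℕ) (x : ℝ) : ∑ α : Expo n, x ^ deg α = (1 + x + x^2)^n := by
  have h1 : ∀ α : Expo n, x ^ deg α = ∏ i, x ^ (α i : ℕ) := by
    intro α
    rw [deg, ← Finset.prod_pow_eq_pow_sum]
  rw [Finset.sum_congr rfl (fun α _ => h1 α)]
  rw [← Fintype.piFinset_univ,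
    ← Finset.prod_univ_sum (fun _ : Fin n => (univ : Finset (Fin 3))) (fun _ j => x ^ (j : ℕ))]
  have h2 : ∀ i : Fin n, ∑ j : Fin 3, x ^ (j : ℕ) = 1 + x + x^2 := by
    intro i
    rw [Fin.sum_univ_three]
    norm_num
  rw [Finset.prod_congr rfl (fun i _ => h2 i), Finset.prod_const, Finset.card_univ,
    Fintype.card_fin]

lemma m_count_bound (n e : ℕ) :
    ((univ.filter (fun α : Expo n => deg α ≤ e)).card : ℝ) * (3/5)^e ≤ (49/25)^n := by
  have h1 : ((univ.filter (fun α : Expo n => deg α ≤ e)).card : ℝ) * (3/5)^e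
      = ∑ _α ∈ univ.filter (fun α : Expo n => deg α ≤ e), ((3:ℝ)/5)^e := by
    rw [Finset.sum_const, nsmul_eq_mul]
  rw [h1]
  have h2 : ∑ _α ∈ univ.filter (fun α : Expo n => deg α ≤ e), ((3:ℝ)/5)^e
      ≤ ∑ α ∈ univ.filter (fun α : Expo n => deg α ≤ e), ((3:ℝ)/5)^(deg α) := by
    apply Finset.sum_le_sum
    intro α hα
    rw [Finset.mem_filter] at hα
    exact pow_le_pow_of_le_one (by norm_num) (by norm_num) hα.2
  refine le_trans h2 (le_trans (Finset.sum_le_sum_of_subset_of_nonneg (Finset.filter_subset _ _)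
    (fun α _ _ => by positivity)) ?_)
  rw [sum_pow_deg n (3/5)]
  apply pow_le_pow_left₀ (by positivity)
  norm_num

lemma u_count_bound (n e : ℕ) :
    ((univ.filter (fun α : Expo n => ¬ deg α ≤ 2*e+1)).card : ℝ) * (5/3)^(2*e+2)
      ≤ (49/9)^n := by
  have h1 : ((univ.filter (fun α : Expo n => ¬ deg α ≤ 2*e+1)).card : ℝ) * (5/3)^(2*e+2)
      = ∑ _α ∈ univ.filter (fun α : Expo n => ¬ deg α ≤ 2*e+1), ((5:ℝ)/3)^(2*e+2) := by
    rw [Finset.sum_const, nsmul_eq_mul]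
  rw [h1]
  have h2 : ∑ _α ∈ univ.filter (fun α : Expo n => ¬ deg α ≤ 2*e+1), ((5:ℝ)/3)^(2*e+2)
      ≤ ∑ α ∈ univ.filter (fun α : Expo n => ¬ deg α ≤ 2*e+1), ((5:ℝ)/3)^(deg α) := by
    apply Finset.sum_le_sum
    intro α hα
    rw [Finset.mem_filter] at hα
    exact pow_le_pow_right₀ (by norm_num) (by omega)
  refine le_trans h2 (le_trans (Finset.sum_le_sum_of_subset_of_nonneg (Finset.filter_subset _ _)
    (fun α _ _ => by positivity)) ?_)
  rw [sum_pow_deg n (5/3)]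
  apply pow_le_pow_left₀ (by positivity)
  norm_num

lemma cube_root_le {M X : ℝ} (hM : 0 ≤ M) (hX : 0 ≤ X) (h : M^3 ≤ X^3) : M ≤ X :=
  (pow_le_pow_iff_left₀ hM hX (by norm_num)).mp h

lemma m_bound (n : ℕ) :
    ((univ.filter (fun α : Expo n => deg α ≤ 2*n/3)).card : ℝ) ≤ 2.838 ^ n := by
  set e := 2*n/3 with he
  set M := ((univ.filter (fun α : Expo n => deg α ≤ e)).card : ℝ) with hM
  have hM0 : 0 ≤ M := Nat.cast_nonneg _
  have h1 := m_count_bound n e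
  have h2 : M ≤ (49/25)^n * (5/3)^e := by
    have hpos : (0:ℝ) < (3/5)^e := by positivity
    rw [← le_div_iff₀ hpos] at h1
    rwa [div_eq_mul_inv, ← inv_pow, show ((3:ℝ)/5)⁻¹ = 5/3 by norm_num] at h1
  apply cube_root_le hM0 (by positivity)
  calc M^3 ≤ ((49/25)^n * (5/3)^e)^3 := pow_le_pow_left₀ hM0 h2 3
  _ = (49/25)^(3*n) * (5/3)^(3*e) := by
      rw [mul_pow, ← pow_mul, ← pow_mul, mul_comm n 3, mul_comm e 3]
  _ ≤ (49/25)^(3*n) * (5/3)^(2*n) := by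
      apply mul_le_mul_of_nonneg_left (pow_le_pow_right₀ (by norm_num) (by omega))
      positivity
  _ = ((49/25:ℝ)^3 * (5/3)^2)^n := by rw [pow_mul, pow_mul, ← mul_pow]
  _ ≤ ((2.838:ℝ)^3)^n := by
      apply pow_le_pow_left₀ (by positivity)
      norm_num
  _ = (2.838^n)^3 := by rw [← pow_mul, mul_comm, pow_mul]

lemma u_bound (n : ℕ) :
    ((univ.filter (fun α : Expo n => ¬ deg α ≤ 2*(2*n/3)+1)).card : ℝ) ≤ 2.838 ^ n := by
  set e := 2*n/3 with he
  set M := ((univ.filter (fun α : Expo n => ¬ deg α ≤ 2*e+1)).card : ℝ) with hM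
  have hM0 : 0 ≤ M := Nat.cast_nonneg _
  have h1 := u_count_bound n e
  have h2 : M ≤ (49/9)^n * (3/5)^(2*e+2) := by
    have hpos : (0:ℝ) < (5/3)^(2*e+2) := by positivity
    rw [← le_div_iff₀ hpos] at h1
    rwa [div_eq_mul_inv, ← inv_pow, show ((5:ℝ)/3)⁻¹ = 3/5 by norm_num] at h1
  apply cube_root_le hM0 (by positivity)
  calc M^3 ≤ ((49/9)^n * (3/5)^(2*e+2))^3 := pow_le_pow_left₀ hM0 h2 3
  _ = (49/9)^(3*n) * (3/5)^(3*(2*e+2)) := by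
      rw [mul_pow, ← pow_mul, ← pow_mul, mul_comm n 3, mul_comm (2*e+2) 3]
  _ ≤ (49/9)^(3*n) * (3/5)^(4*n) := by
      apply mul_le_mul_of_nonneg_left (pow_le_pow_of_le_one (by norm_num) (by norm_num) (by omega))
      positivity
  _ = ((49/9:ℝ)^3 * ((3/5)^4))^n := by rw [pow_mul, pow_mul, ← mul_pow]
  _ ≤ ((2.838:ℝ)^3)^n := by
      apply pow_le_pow_left₀ (by positivity)
      norm_num
  _ = (2.838^n)^3 := by rw [← pow_mul, mul_comm, pow_mul]

end Numerics

/-- Any cap set `A ⊆ 𝔽₃ⁿ` satisfies `|A| ≤ C · 2.838ⁿ` for an absolute constant `C > 0`. -/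
theorem capset_bound :
    ∃ C : ℝ, 0 < C ∧
      ∀ (n : ℕ) (A : Finset (Fin n → ZMod 3)),
        (¬ ∃ x d : Fin n → ZMod 3, d ≠ 0 ∧ x ∈ A ∧ x + d ∈ A ∧ x + 2 • d ∈ A) →
        (A.card : ℝ) ≤ C * 2.838 ^ n := by
  refine ⟨3, by norm_num, ?_⟩
  intro n A hcap
  have hkey := card_bound (2*n/3) A hcap
  have hcast : (A.card : ℝ)
      ≤ ((Finset.univ.filter (fun α : Expo n => ¬ deg α ≤ 2*(2*n/3)+1)).card : ℝ)
        + 2 * ((Finset.univ.filter (fun α : Expo n => deg α ≤ 2*n/3)).card : ℝ) := by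
    exact_mod_cast hkey
  have h1 := u_bound n
  have h2 := m_bound n
  calc (A.card : ℝ) ≤ _ := hcast
  _ ≤ 2.838^n + 2 * 2.838^n := by
      apply add_le_add h1
      apply mul_le_mul_of_nonneg_left h2 (by norm_num)
  _ = 3 * 2.838^n := by ring
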